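/- Let A be a finite nonempty index set and r_s ∈ [0,1) for each s ∈ A, and let r̄ = (Σ_{s∈A} r_s/(1−r_s)) / (1 + Σ_{s∈A} r_s/(1−r_s)). Then r̄ ≥ r_{s₀} for every s₀ ∈ A. In particular, if any single sensor's existence probability is high then the complementarily fused existence probability is at least as high. -/
import Mathlib


/-- ACF fused existence probability dominates each individual sensor's
probability: for a finite nonempty active-sensor set `A` with `r s ∈ [0,1)`,
the fused value `r̄ = (Σ r_s/(1−r_s)) / (1 + Σ r_s/(1−r_s))` satisfies
`r̄ ≥ r s₀` for every `s₀ ∈ A`. -/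
theorem acf_fused_existence_ge_individual
    {ι : Type*} (A : Finset ι) (hA : A.Nonempty)
    (r : ι → ℝ) (hr : ∀ s ∈ A, 0 ≤ r s ∧ r s < 1)
    (rbar : ℝ)
    (hrbar : rbar = (∑ s ∈ A, r s / (1 - r s)) / (1 + ∑ s ∈ A, r s / (1 - r s))) :
    ∀ s₀ ∈ A, r s₀ ≤ rbar := by
  intro s₀ hs₀
  set T := ∑ s ∈ A, r s / (1 - r s) with hT
  have hT0 : 0 ≤ T := Finset.sum_nonneg fun s hs => by
    have := hr s hs
    exact div_nonneg this.1 (by linarith [this.2])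
  have h1 : (0:ℝ) < 1 - r s₀ := by linarith [(hr s₀ hs₀).2]
  have hle : r s₀ / (1 - r s₀) ≤ T :=
    Finset.single_le_sum (f := fun s => r s / (1 - r s)) (fun s hs => div_nonneg (hr s hs).1
      (by linarith [(hr s hs).2])) hs₀
  have hkey : r s₀ ≤ T * (1 - r s₀) := by
    have := (div_le_iff₀ h1).mp hle
    linarith
  rw [hrbar, le_div_iff₀ (by linarith)]
  nlinarith
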